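/- There exists an absolute constant C > 0 such that the following holds. Let J be any probability distribution on [0,1] × {0,1}, let ε, δ ∈ (0, 1/3), and let T be a positive integer with T > C ε^{−2} log(1/δ). Let (v_1,y_1),…,(v_T,y_T) be drawn i.i.d. from J and let J_S denote the uniform (empirical) distribution on these T points. Then with probability at least 1 − δ over the sample, |ℓ1-ATB(J_S) − ℓ1-ATB(J)| ≤ ε and |ATB(J_S) − ATB(J)| ≤ ε. -/

import Mathlib

open MeasureTheory Finset
open scoped ENNReal

noncomputable section

/-- Bias of the lower bin `{v < q}` under a distribution `mu` of prediction-state pairs. -/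
def binNeg (mu : Measure (ℝ × ℝ)) (q : ℝ) : ℝ :=
  ∫ x, (x.1 - x.2) * (if x.1 < q then 1 else 0) ∂mu

/-- Bias of the upper bin `{v ≥ q}` under a distribution `mu` of prediction-state pairs. -/
def binPos (mu : Measure (ℝ × ℝ)) (q : ℝ) : ℝ :=
  ∫ x, (x.1 - x.2) * (if q ≤ x.1 then 1 else 0) ∂mu

/-- Averaged two-bin calibration error of a prediction-state distribution. -/
def ATB (mu : Measure (ℝ × ℝ)) : ℝ :=
  ∫ q in (0:ℝ)..1, ((binNeg mu q)^2 + (binPos mu q)^2)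

/-- ℓ1 variant of the averaged two-bin calibration error of a distribution. -/
def l1ATB (mu : Measure (ℝ × ℝ)) : ℝ :=
  ∫ q in (0:ℝ)..1, (|binNeg mu q| + |binPos mu q|)

/-- The empirical (uniform) distribution of a sample of `T` points. -/
def empMeasure {T : ℕ} (s : Fin T → ℝ × ℝ) : Measure (ℝ × ℝ) :=
  (T : ℝ≥0∞)⁻¹ • ∑ t : Fin T, Measure.dirac (s t)

namespace ATBwork
open Real

lemma integrable_of_ae_bound {α : Type*} [MeasurableSpace α] {μ : Measure α} [IsFiniteMeasure μ]
    {f : α → ℝ} (hm : AEStronglyMeasurable f μ) {c : ℝ} (hb : ∀ᵐ x ∂μ, |f x| ≤ c) :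
    Integrable f μ :=
  Integrable.mono' (integrable_const c) hm (by simpa [Real.norm_eq_abs] using hb)

lemma exp_le_cosh_add (v : ℝ) {z : ℝ} (hz : |z| ≤ 2) :
    Real.exp (v * z) ≤ Real.cosh (2*v) + (z/2) * Real.sinh (2*v) := by
  obtain ⟨h1, h2⟩ := abs_le.mp hz
  have hc := convexOn_exp.2 (Set.mem_univ (-(2*v))) (Set.mem_univ (2*v))
    (show (0:ℝ) ≤ (2 - z)/4 by linarith) (show (0:ℝ) ≤ (2 + z)/4 by linarith)
    (show (2 - z)/4 + (2 + z)/4 = 1 by ring)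
  have harg : ((2 - z)/4) • (-(2*v)) + ((2 + z)/4) • (2*v) = v * z := by
    simp only [smul_eq_mul]; ring
  rw [harg] at hc
  refine hc.trans (le_of_eq ?_)
  simp only [smul_eq_mul, Real.cosh_eq, Real.sinh_eq]
  ring

lemma mgf_single {α : Type*} [MeasurableSpace α] {μ : Measure α} [IsProbabilityMeasure μ]
    {Z : α → ℝ} (hZ : AEStronglyMeasurable Z μ) (hb : ∀ᵐ x ∂μ, |Z x| ≤ 2)
    (h0 : ∫ x, Z x ∂μ = 0) (v : ℝ) :
    ∫ x, Real.exp (v * Z x) ∂μ ≤ Real.exp (2 * v^2) := by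
  have hZint : Integrable Z μ := integrable_of_ae_bound hZ hb
  have hexpm : AEStronglyMeasurable (fun x => Real.exp (v * Z x)) μ :=
    (Real.continuous_exp.comp_aestronglyMeasurable (hZ.const_smul' v))
  have hint1 : Integrable (fun x => Real.exp (v * Z x)) μ := by
    refine integrable_of_ae_bound hexpm (c := Real.exp (2 * |v|)) ?_
    filter_upwards [hb] with x hx
    rw [abs_of_pos (Real.exp_pos _)]
    apply Real.exp_le_exp.mpr
    calc v * Z x ≤ |v * Z x| := le_abs_self _
      _ = |v| * |Z x| := abs_mul _ _
      _ ≤ |v| * 2 := by nlinarith [abs_nonneg v]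
      _ = 2 * |v| := by ring
  have hint2 : Integrable (fun x => Real.cosh (2*v) + (Z x / 2) * Real.sinh (2*v)) μ :=
    (integrable_const _).add ((hZint.div_const 2).mul_const _)
  have hmono : ∫ x, Real.exp (v * Z x) ∂μ ≤
      ∫ x, (Real.cosh (2*v) + (Z x / 2) * Real.sinh (2*v)) ∂μ := by
    refine integral_mono_ae hint1 hint2 ?_
    filter_upwards [hb] with x hx using exp_le_cosh_add v hx
  have heval : ∫ x, (Real.cosh (2*v) + (Z x / 2) * Real.sinh (2*v)) ∂μ = Real.cosh (2*v) := by
    rw [integral_add (integrable_const _) ((hZint.div_const 2).mul_const _)]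
    simp only [integral_const, measure_univ, probReal_univ, ENNReal.toReal_one, one_smul]
    rw [integral_mul_const, integral_div, h0]
    ring
  calc ∫ x, Real.exp (v * Z x) ∂μ ≤ Real.cosh (2*v) := heval ▸ hmono
    _ ≤ Real.exp ((2*v)^2/2) := Real.cosh_le_exp_half_sq _
    _ = Real.exp (2 * v^2) := by ring_nf

lemma integral_pi_pow {α : Type*} [MeasurableSpace α] (mu : Measure α) [IsProbabilityMeasure mu]
    (T : ℕ) (f : α → ℝ) :
    ∫ s : Fin T → α, ∏ t, f (s t) ∂(Measure.pi fun _ => mu) = (∫ x, f x ∂mu) ^ T := by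
  letI : MeasureSpace α := ⟨mu⟩
  have := MeasureTheory.integral_fintype_prod_eq_pow (𝕜 := ℝ) (ι := Fin T) f (μ := mu)
  simpa [Fintype.card_fin] using this

lemma ae_all_coords {α : Type*} [MeasurableSpace α] {mu : Measure α} [IsProbabilityMeasure mu]
    {T : ℕ} {p : α → Prop} (hp : ∀ᵐ x ∂mu, p x) :
    ∀ᵐ s : Fin T → α ∂(Measure.pi fun _ => mu), ∀ t, p (s t) := by
  rw [ae_all_iff]
  intro t
  have h0 : mu {x | ¬ p x} = 0 := by simpa [ae_iff] using hp
  have := Measure.pi_eval_preimage_null (fun _ : Fin T => mu) (i := t) h0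
  simpa [ae_iff, Function.eval, Set.preimage] using this


variable {α : Type*} [MeasurableSpace α] {mu : Measure α} [IsProbabilityMeasure mu]

lemma abs_integral_le_one {g : α → ℝ} (hgm : Measurable g) (hgb : ∀ᵐ x ∂mu, |g x| ≤ 1) :
    |∫ x, g x ∂mu| ≤ 1 := by
  have hint : Integrable g mu := integrable_of_ae_bound hgm.aestronglyMeasurable hgb
  have habs : |∫ x, g x ∂mu| ≤ ∫ x, |g x| ∂mu := by
    simpa [Real.norm_eq_abs] using norm_integral_le_integral_norm (μ := mu) g
  calc |∫ x, g x ∂mu| ≤ ∫ x, |g x| ∂mu := habs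
    _ ≤ ∫ _x, (1:ℝ) ∂mu := integral_mono_ae hint.abs (integrable_const _) hgb
    _ = 1 := by simp

lemma mgf_mean {g : α → ℝ} (hgm : Measurable g) (hgb : ∀ᵐ x ∂mu, |g x| ≤ 1)
    {T : ℕ} (hT : 0 < T) (u : ℝ) :
    ∫ s : Fin T → α, Real.exp (u * ((T:ℝ)⁻¹ * ∑ t, g (s t) - ∫ x, g x ∂mu))
        ∂(Measure.pi fun _ => mu) ≤ Real.exp (2 * u^2 / T) := by
  set m := ∫ x, g x ∂mu with hm
  have hTne : (T:ℝ) ≠ 0 := Nat.cast_ne_zero.mpr hT.ne'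
  have hmb : |m| ≤ 1 := abs_integral_le_one hgm hgb
  have hgint : Integrable g mu := integrable_of_ae_bound hgm.aestronglyMeasurable hgb
  have heq : ∀ s : Fin T → α, u * ((T:ℝ)⁻¹ * ∑ t, g (s t) - m)
      = ∑ t, (u/T) * (g (s t) - m) := by
    intro s
    have h1 : ∑ t : Fin T, (u/T) * (g (s t) - m) = (u/T) * ∑ t : Fin T, (g (s t) - m) :=
      (Finset.mul_sum _ _ _).symm
    rw [h1, Finset.sum_sub_distrib, Finset.sum_const, Finset.card_univ, Fintype.card_fin,
      nsmul_eq_mul]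
    field_simp
  have hprod : ∀ s : Fin T → α, Real.exp (u * ((T:ℝ)⁻¹ * ∑ t, g (s t) - m))
      = ∏ t, Real.exp ((u/T) * (g (s t) - m)) := by
    intro s
    rw [heq s, Real.exp_sum]
  calc ∫ s : Fin T → α, Real.exp (u * ((T:ℝ)⁻¹ * ∑ t, g (s t) - m)) ∂(Measure.pi fun _ => mu)
      = ∫ s : Fin T → α, ∏ t, Real.exp ((u/T) * (g (s t) - m)) ∂(Measure.pi fun _ => mu) := by
        simp_rw [hprod]
    _ = (∫ x, Real.exp ((u/T) * (g x - m)) ∂mu) ^ T :=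
        integral_pi_pow mu T (fun x => Real.exp ((u/T) * (g x - m)))
    _ ≤ (Real.exp (2 * (u/T)^2)) ^ T := by
        refine pow_le_pow_left₀ (integral_nonneg fun x => (Real.exp_pos _).le) ?_ T
        refine mgf_single ((hgm.sub measurable_const).aestronglyMeasurable) ?_ ?_ (u/T)
        · filter_upwards [hgb] with x hx
          calc |g x - m| ≤ |g x| + |m| := abs_sub _ _
            _ ≤ 2 := by linarith
        · simp only [Pi.sub_apply]
          rw [integral_sub hgint (integrable_const _)]
          simp [hm]
    _ = Real.exp (2 * u^2 / T) := by
        rw [← Real.exp_nat_mul]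
        congr 1
        field_simp

lemma integrable_exp_mean {g : α → ℝ} (hgm : Measurable g) (hgb : ∀ᵐ x ∂mu, |g x| ≤ 1)
    {T : ℕ} (hT : 0 < T) (u : ℝ) {F : ℝ → ℝ} (hF : Continuous F) :
    Integrable (fun s : Fin T → α => F ((T:ℝ)⁻¹ * ∑ t, g (s t) - ∫ x, g x ∂mu))
      (Measure.pi fun _ => mu) := by
  have hTne : (T:ℝ) ≠ 0 := Nat.cast_ne_zero.mpr hT.ne'
  have hmb : |∫ x, g x ∂mu| ≤ 1 := abs_integral_le_one hgm hgb
  have hmeas : Measurable fun s : Fin T → α => (T:ℝ)⁻¹ * ∑ t, g (s t) - ∫ x, g x ∂mu := by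
    apply Measurable.sub ?_ measurable_const
    exact (Finset.measurable_sum _ fun t _ => hgm.comp (measurable_pi_apply t)).const_mul _
  refine integrable_of_ae_bound ((hF.measurable.comp hmeas).aestronglyMeasurable)
    (c := sSup ((fun z => |F z|) '' Set.Icc (-2:ℝ) 2)) ?_
  have hbdd := (isCompact_Icc (a := (-2:ℝ)) (b := 2)).bddAbove_image
    (hF.abs.continuousOn)
  filter_upwards [ae_all_coords hgb] with s hs
  have hΔ : (T:ℝ)⁻¹ * ∑ t, g (s t) - ∫ x, g x ∂mu ∈ Set.Icc (-2:ℝ) 2 := by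
    have h1 : |(T:ℝ)⁻¹ * ∑ t, g (s t)| ≤ 1 := by
      rw [abs_mul, abs_inv, Nat.abs_cast]
      rw [inv_mul_le_iff₀ (by positivity), mul_one]
      calc |∑ t, g (s t)| ≤ ∑ t, |g (s t)| := Finset.abs_sum_le_sum_abs _ _
        _ ≤ ∑ _t : Fin T, (1:ℝ) := Finset.sum_le_sum fun t _ => hs t
        _ = T := by simp
    have h2 := abs_le.mp h1
    have h3 := abs_le.mp hmb
    simp only [Set.mem_Icc]
    constructor <;> linarith
  exact le_csSup hbdd ⟨_, hΔ, rfl⟩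


lemma absDelta_le {T : ℕ} (hT : 0 < T) {g : α → ℝ} {m : ℝ} (hmb : |m| ≤ 1)
    {s : Fin T → α} (hs : ∀ t, |g (s t)| ≤ 1) :
    |(T:ℝ)⁻¹ * ∑ t, g (s t) - m| ≤ 2 := by
  have h1 : |(T:ℝ)⁻¹ * ∑ t, g (s t)| ≤ 1 := by
    rw [abs_mul, abs_inv, Nat.abs_cast]
    rw [inv_mul_le_iff₀ (by positivity), mul_one]
    calc |∑ t, g (s t)| ≤ ∑ t, |g (s t)| := Finset.abs_sum_le_sum_abs _ _
      _ ≤ ∑ _t : Fin T, (1:ℝ) := Finset.sum_le_sum fun t _ => hs t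
      _ = T := by simp
  have h2 := abs_le.mp h1
  have h3 := abs_le.mp hmb
  rw [abs_le]
  constructor <;> linarith

lemma mgf_mean_abs {g : α → ℝ} (hgm : Measurable g) (hgb : ∀ᵐ x ∂mu, |g x| ≤ 1)
    {T : ℕ} (hT : 0 < T) (u : ℝ) :
    ∫ s : Fin T → α, Real.exp (u * |(T:ℝ)⁻¹ * ∑ t, g (s t) - ∫ x, g x ∂mu|)
        ∂(Measure.pi fun _ => mu) ≤ 2 * Real.exp (2 * u^2 / T) := by
  have key : ∀ z : ℝ, Real.exp (u * |z|) ≤ Real.exp (u * z) + Real.exp (u * (-z)) := by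
    intro z
    rcases abs_choice z with h | h <;> rw [h]
    · exact le_add_of_nonneg_right (Real.exp_pos _).le
    · exact le_add_of_nonneg_left (Real.exp_pos _).le
  have hint1 := integrable_exp_mean hgm hgb hT u (F := fun z => Real.exp (u * |z|))
    (Real.continuous_exp.comp (continuous_const.mul continuous_abs))
  have hint2 := integrable_exp_mean hgm hgb hT u (F := fun z => Real.exp (u * z))
    (Real.continuous_exp.comp (continuous_const.mul continuous_id))
  have hint3 := integrable_exp_mean hgm hgb hT u (F := fun z => Real.exp (u * (-z)))
    (Real.continuous_exp.comp (continuous_const.mul continuous_neg))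
  calc ∫ s : Fin T → α, Real.exp (u * |(T:ℝ)⁻¹ * ∑ t, g (s t) - ∫ x, g x ∂mu|)
        ∂(Measure.pi fun _ => mu)
      ≤ ∫ s : Fin T → α, (Real.exp (u * ((T:ℝ)⁻¹ * ∑ t, g (s t) - ∫ x, g x ∂mu))
          + Real.exp (u * (-((T:ℝ)⁻¹ * ∑ t, g (s t) - ∫ x, g x ∂mu))))
        ∂(Measure.pi fun _ => mu) := integral_mono hint1 (hint2.add hint3) fun s => key _
    _ = (∫ s : Fin T → α, Real.exp (u * ((T:ℝ)⁻¹ * ∑ t, g (s t) - ∫ x, g x ∂mu))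
          ∂(Measure.pi fun _ => mu))
        + ∫ s : Fin T → α, Real.exp ((-u) * ((T:ℝ)⁻¹ * ∑ t, g (s t) - ∫ x, g x ∂mu))
          ∂(Measure.pi fun _ => mu) := by
        rw [integral_add hint2 hint3]
        congr 1
        apply integral_congr_ae
        filter_upwards with s
        ring_nf
    _ ≤ Real.exp (2 * u^2 / T) + Real.exp (2 * (-u)^2 / T) :=
        add_le_add (mgf_mean hgm hgb hT u) (mgf_mean hgm hgb hT (-u))
    _ = 2 * Real.exp (2 * u^2 / T) := by rw [neg_sq]; ring

lemma integrable_exp_two {g₁ g₂ : α → ℝ} (h1m : Measurable g₁) (h1b : ∀ᵐ x ∂mu, |g₁ x| ≤ 1)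
    (h2m : Measurable g₂) (h2b : ∀ᵐ x ∂mu, |g₂ x| ≤ 1) {T : ℕ} (hT : 0 < T) {l : ℝ}
    (hl : 0 ≤ l) :
    Integrable (fun s : Fin T → α =>
        Real.exp (l * (|(T:ℝ)⁻¹ * ∑ t, g₁ (s t) - ∫ x, g₁ x ∂mu|
          + |(T:ℝ)⁻¹ * ∑ t, g₂ (s t) - ∫ x, g₂ x ∂mu|)))
      (Measure.pi fun _ => mu) := by
  have hmeas : ∀ (g : α → ℝ), Measurable g →
      Measurable (fun s : Fin T → α => (T:ℝ)⁻¹ * ∑ t, g (s t) - ∫ x, g x ∂mu) := by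
    intro g hg
    exact ((Finset.measurable_sum _ fun t _ => hg.comp (measurable_pi_apply t)).const_mul
      _).sub measurable_const
  refine integrable_of_ae_bound ?_ (c := Real.exp (l * 4)) ?_
  · exact (Real.measurable_exp.comp ((((hmeas g₁ h1m).abs.add
      (hmeas g₂ h2m).abs).const_mul l))).aestronglyMeasurable
  · filter_upwards [ae_all_coords h1b, ae_all_coords h2b] with s hs1 hs2
    rw [abs_of_pos (Real.exp_pos _), Real.exp_le_exp]
    have d1 := absDelta_le hT (abs_integral_le_one h1m h1b) hs1
    have d2 := absDelta_le hT (abs_integral_le_one h2m h2b) hs2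
    nlinarith [abs_nonneg ((T:ℝ)⁻¹ * ∑ t, g₁ (s t) - ∫ x, g₁ x ∂mu),
      abs_nonneg ((T:ℝ)⁻¹ * ∑ t, g₂ (s t) - ∫ x, g₂ x ∂mu)]

lemma mgf_two {g₁ g₂ : α → ℝ} (h1m : Measurable g₁) (h1b : ∀ᵐ x ∂mu, |g₁ x| ≤ 1)
    (h2m : Measurable g₂) (h2b : ∀ᵐ x ∂mu, |g₂ x| ≤ 1) {T : ℕ} (hT : 0 < T) {l : ℝ}
    (hl : 0 ≤ l) :
    ∫ s : Fin T → α,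
        Real.exp (l * (|(T:ℝ)⁻¹ * ∑ t, g₁ (s t) - ∫ x, g₁ x ∂mu|
          + |(T:ℝ)⁻¹ * ∑ t, g₂ (s t) - ∫ x, g₂ x ∂mu|))
      ∂(Measure.pi fun _ => mu) ≤ 2 * Real.exp (8 * l^2 / T) := by
  have key : ∀ a b : ℝ, Real.exp (l * (a + b))
      ≤ (Real.exp ((2*l) * a) + Real.exp ((2*l) * b)) / 2 := by
    intro a b
    have h1 : Real.exp (l * (a+b)) = Real.exp (l*a) * Real.exp (l*b) := by
      rw [← Real.exp_add]; ring_nf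
    have h2 : Real.exp ((2*l)*a) = Real.exp (l*a) * Real.exp (l*a) := by
      rw [← Real.exp_add]; ring_nf
    have h3 : Real.exp ((2*l)*b) = Real.exp (l*b) * Real.exp (l*b) := by
      rw [← Real.exp_add]; ring_nf
    rw [h1, h2, h3]
    nlinarith [sq_nonneg (Real.exp (l*a) - Real.exp (l*b))]
  have hint1 := integrable_exp_mean h1m h1b hT (2*l) (F := fun z => Real.exp ((2*l) * |z|))
    (Real.continuous_exp.comp (continuous_const.mul continuous_abs))
  have hint2 := integrable_exp_mean h2m h2b hT (2*l) (F := fun z => Real.exp ((2*l) * |z|))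
    (Real.continuous_exp.comp (continuous_const.mul continuous_abs))
  calc ∫ s : Fin T → α,
        Real.exp (l * (|(T:ℝ)⁻¹ * ∑ t, g₁ (s t) - ∫ x, g₁ x ∂mu|
          + |(T:ℝ)⁻¹ * ∑ t, g₂ (s t) - ∫ x, g₂ x ∂mu|)) ∂(Measure.pi fun _ => mu)
      ≤ ∫ s : Fin T → α,
          ((Real.exp ((2*l) * |(T:ℝ)⁻¹ * ∑ t, g₁ (s t) - ∫ x, g₁ x ∂mu|)
            + Real.exp ((2*l) * |(T:ℝ)⁻¹ * ∑ t, g₂ (s t) - ∫ x, g₂ x ∂mu|)) / 2)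
        ∂(Measure.pi fun _ => mu) := by
        refine integral_mono (integrable_exp_two h1m h1b h2m h2b hT hl)
          ((hint1.add hint2).div_const 2) fun s => key _ _
    _ = ((∫ s : Fin T → α, Real.exp ((2*l) * |(T:ℝ)⁻¹ * ∑ t, g₁ (s t) - ∫ x, g₁ x ∂mu|)
            ∂(Measure.pi fun _ => mu))
          + ∫ s : Fin T → α, Real.exp ((2*l) * |(T:ℝ)⁻¹ * ∑ t, g₂ (s t) - ∫ x, g₂ x ∂mu|)
            ∂(Measure.pi fun _ => mu)) / 2 := by
        rw [integral_div, integral_add hint1 hint2]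
    _ ≤ (2 * Real.exp (2 * (2*l)^2 / T) + 2 * Real.exp (2 * (2*l)^2 / T)) / 2 := by
        gcongr
        · exact mgf_mean_abs h1m h1b hT (2*l)
        · exact mgf_mean_abs h2m h2b hT (2*l)
    _ = 2 * Real.exp (8 * l^2 / T) := by
        rw [show (2:ℝ) * (2*l)^2 = 8 * l^2 by ring]
        ring


/-! ### The specific setting -/

def Gset : Set (ℝ × ℝ) := {x | x.1 ∈ Set.Icc (0:ℝ) 1 ∧ (x.2 = 0 ∨ x.2 = 1)}

lemma measurableSet_Gset : MeasurableSet Gset := by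
  unfold Gset
  apply MeasurableSet.inter
  · exact measurable_fst measurableSet_Icc
  · exact MeasurableSet.union (measurable_snd (measurableSet_singleton 0))
      (measurable_snd (measurableSet_singleton 1))

lemma abs_sub_le_one_of_mem {x : ℝ × ℝ} (hx : x ∈ Gset) : |x.1 - x.2| ≤ 1 := by
  obtain ⟨⟨h0, h1⟩, h2⟩ := hx
  rcases h2 with h | h <;> rw [h] <;> rw [abs_le] <;> constructor <;> linarith

def fneg (q : ℝ) (x : ℝ × ℝ) : ℝ := (x.1 - x.2) * (if x.1 < q then 1 else 0)
def fpos (q : ℝ) (x : ℝ × ℝ) : ℝ := (x.1 - x.2) * (if q ≤ x.1 then 1 else 0)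

lemma measurable_fneg_pair : Measurable fun p : ℝ × (ℝ × ℝ) => fneg p.1 p.2 := by
  unfold fneg
  refine Measurable.mul (by fun_prop) ?_
  exact Measurable.ite (measurableSet_lt (by fun_prop) (by fun_prop))
    measurable_const measurable_const

lemma measurable_fpos_pair : Measurable fun p : ℝ × (ℝ × ℝ) => fpos p.1 p.2 := by
  unfold fpos
  refine Measurable.mul (by fun_prop) ?_
  exact Measurable.ite (measurableSet_le (by fun_prop) (by fun_prop))
    measurable_const measurable_const

lemma measurable_fneg (q : ℝ) : Measurable (fneg q) :=
  measurable_fneg_pair.comp (measurable_prodMk_left)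

lemma measurable_fpos (q : ℝ) : Measurable (fpos q) :=
  measurable_fpos_pair.comp (measurable_prodMk_left)

lemma abs_fneg_le {q : ℝ} {x : ℝ × ℝ} (hx : x ∈ Gset) : |fneg q x| ≤ 1 := by
  unfold fneg
  rw [abs_mul]
  have h1 := abs_sub_le_one_of_mem hx
  have h2 : |(if x.1 < q then (1:ℝ) else 0)| ≤ 1 := by split <;> simp
  nlinarith [abs_nonneg (x.1 - x.2), abs_nonneg (if x.1 < q then (1:ℝ) else 0)]

lemma abs_fpos_le {q : ℝ} {x : ℝ × ℝ} (hx : x ∈ Gset) : |fpos q x| ≤ 1 := by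
  unfold fpos
  rw [abs_mul]
  have h1 := abs_sub_le_one_of_mem hx
  have h2 : |(if q ≤ x.1 then (1:ℝ) else 0)| ≤ 1 := by split <;> simp
  nlinarith [abs_nonneg (x.1 - x.2), abs_nonneg (if q ≤ x.1 then (1:ℝ) else 0)]

lemma abs_fneg_le' {q : ℝ} (x : ℝ × ℝ) : |fneg q x| ≤ |x.1 - x.2| := by
  unfold fneg
  rw [abs_mul]
  have h2 : |(if x.1 < q then (1:ℝ) else 0)| ≤ 1 := by split <;> simp
  nlinarith [abs_nonneg (x.1 - x.2)]

lemma abs_fpos_le' {q : ℝ} (x : ℝ × ℝ) : |fpos q x| ≤ |x.1 - x.2| := by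
  unfold fpos
  rw [abs_mul]
  have h2 : |(if q ≤ x.1 then (1:ℝ) else 0)| ≤ 1 := by split <;> simp
  nlinarith [abs_nonneg (x.1 - x.2)]

lemma binNeg_eq (mu : Measure (ℝ × ℝ)) (q : ℝ) : binNeg mu q = ∫ x, fneg q x ∂mu := rfl
lemma binPos_eq (mu : Measure (ℝ × ℝ)) (q : ℝ) : binPos mu q = ∫ x, fpos q x ∂mu := rfl

lemma integrable_dirac'' {f : ℝ × ℝ → ℝ} (hf : Measurable f) (a : ℝ × ℝ) :
    Integrable f (Measure.dirac a) := by
  refine ⟨hf.aestronglyMeasurable, ?_⟩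
  simp [HasFiniteIntegral, lintegral_dirac]

lemma binNeg_emp {T : ℕ} (s : Fin T → ℝ × ℝ) (q : ℝ) :
    binNeg (empMeasure s) q = (T:ℝ)⁻¹ * ∑ t, fneg q (s t) := by
  rw [binNeg_eq]
  unfold empMeasure
  rw [integral_smul_measure,
    integral_finset_sum_measure (fun t _ => integrable_dirac'' (measurable_fneg q) (s t))]
  simp [integral_dirac, ENNReal.toReal_inv]

lemma binPos_emp {T : ℕ} (s : Fin T → ℝ × ℝ) (q : ℝ) :
    binPos (empMeasure s) q = (T:ℝ)⁻¹ * ∑ t, fpos q (s t) := by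
  rw [binPos_eq]
  unfold empMeasure
  rw [integral_smul_measure,
    integral_finset_sum_measure (fun t _ => integrable_dirac'' (measurable_fpos q) (s t))]
  simp [integral_dirac, ENNReal.toReal_inv]


def muq : Measure ℝ := volume.restrict (Set.Ioc (0:ℝ) 1)

instance : IsProbabilityMeasure muq := by
  constructor
  rw [muq, Measure.restrict_apply MeasurableSet.univ, Set.univ_inter, Real.volume_Ioc]
  norm_num

def An (T : ℕ) (q : ℝ) (s : Fin T → ℝ × ℝ) : ℝ := (T:ℝ)⁻¹ * ∑ t, fneg q (s t)
def Ap (T : ℕ) (q : ℝ) (s : Fin T → ℝ × ℝ) : ℝ := (T:ℝ)⁻¹ * ∑ t, fpos q (s t)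

def hq (mu : Measure (ℝ × ℝ)) (T : ℕ) (q : ℝ) (s : Fin T → ℝ × ℝ) : ℝ :=
  |An T q s - binNeg mu q| + |Ap T q s - binPos mu q|

def Dd (mu : Measure (ℝ × ℝ)) (T : ℕ) (s : Fin T → ℝ × ℝ) : ℝ :=
  ∫ q, hq mu T q s ∂muq

lemma hq_nonneg (mu : Measure (ℝ × ℝ)) (T : ℕ) (q : ℝ) (s : Fin T → ℝ × ℝ) :
    0 ≤ hq mu T q s := add_nonneg (abs_nonneg _) (abs_nonneg _)

lemma measurable_binNeg (mu : Measure (ℝ × ℝ)) [SFinite mu] :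
    Measurable fun q => binNeg mu q := by
  have : StronglyMeasurable fun p : ℝ × (ℝ × ℝ) => fneg p.1 p.2 :=
    measurable_fneg_pair.stronglyMeasurable
  exact this.integral_prod_right'.measurable

lemma measurable_binPos (mu : Measure (ℝ × ℝ)) [SFinite mu] :
    Measurable fun q => binPos mu q := by
  have : StronglyMeasurable fun p : ℝ × (ℝ × ℝ) => fpos p.1 p.2 :=
    measurable_fpos_pair.stronglyMeasurable
  exact this.integral_prod_right'.measurable

lemma measurable_An_pair (T : ℕ) :
    Measurable fun p : ℝ × (Fin T → ℝ × ℝ) => An T p.1 p.2 := by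
  unfold An
  refine Measurable.const_mul ?_ _
  refine Finset.measurable_sum _ fun t _ => ?_
  exact measurable_fneg_pair.comp (measurable_fst.prodMk ((measurable_pi_apply t).comp
    measurable_snd))

lemma measurable_Ap_pair (T : ℕ) :
    Measurable fun p : ℝ × (Fin T → ℝ × ℝ) => Ap T p.1 p.2 := by
  unfold Ap
  refine Measurable.const_mul ?_ _
  refine Finset.measurable_sum _ fun t _ => ?_
  exact measurable_fpos_pair.comp (measurable_fst.prodMk ((measurable_pi_apply t).comp
    measurable_snd))

lemma measurable_hq_pair (mu : Measure (ℝ × ℝ)) [SFinite mu] (T : ℕ) :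
    Measurable fun p : ℝ × (Fin T → ℝ × ℝ) => hq mu T p.1 p.2 := by
  unfold hq
  exact ((measurable_An_pair T).sub ((measurable_binNeg mu).comp measurable_fst)).abs.add
    ((measurable_Ap_pair T).sub ((measurable_binPos mu).comp measurable_fst)).abs

lemma measurable_Dd (mu : Measure (ℝ × ℝ)) [SFinite mu] (T : ℕ) :
    Measurable (Dd mu T) := by
  have : StronglyMeasurable fun p : ℝ × (Fin T → ℝ × ℝ) => hq mu T p.1 p.2 :=
    (measurable_hq_pair mu T).stronglyMeasurable
  exact this.integral_prod_left'.measurable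


variable {mu : Measure (ℝ × ℝ)} {T : ℕ}

lemma ae_fneg_le [IsProbabilityMeasure mu] (hG : ∀ᵐ x ∂mu, x ∈ Gset) (q : ℝ) :
    ∀ᵐ x ∂mu, |fneg q x| ≤ 1 := by
  filter_upwards [hG] with x hx using abs_fneg_le hx

lemma ae_fpos_le [IsProbabilityMeasure mu] (hG : ∀ᵐ x ∂mu, x ∈ Gset) (q : ℝ) :
    ∀ᵐ x ∂mu, |fpos q x| ≤ 1 := by
  filter_upwards [hG] with x hx using abs_fpos_le hx

lemma abs_binNeg_le [IsProbabilityMeasure mu] (hG : ∀ᵐ x ∂mu, x ∈ Gset) (q : ℝ) :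
    |binNeg mu q| ≤ 1 := by
  rw [binNeg_eq]; exact abs_integral_le_one (measurable_fneg q) (ae_fneg_le hG q)

lemma abs_binPos_le [IsProbabilityMeasure mu] (hG : ∀ᵐ x ∂mu, x ∈ Gset) (q : ℝ) :
    |binPos mu q| ≤ 1 := by
  rw [binPos_eq]; exact abs_integral_le_one (measurable_fpos q) (ae_fpos_le hG q)

lemma abs_An_le (hT : 0 < T) {s : Fin T → ℝ × ℝ} (hs : ∀ t, s t ∈ Gset) (q : ℝ) :
    |An T q s| ≤ 1 := by
  unfold An
  rw [abs_mul, abs_inv, Nat.abs_cast, inv_mul_le_iff₀ (by exact_mod_cast hT), mul_one]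
  calc |∑ t, fneg q (s t)| ≤ ∑ t, |fneg q (s t)| := Finset.abs_sum_le_sum_abs _ _
    _ ≤ ∑ _t : Fin T, (1:ℝ) := Finset.sum_le_sum fun t _ => abs_fneg_le (hs t)
    _ = T := by simp

lemma abs_Ap_le (hT : 0 < T) {s : Fin T → ℝ × ℝ} (hs : ∀ t, s t ∈ Gset) (q : ℝ) :
    |Ap T q s| ≤ 1 := by
  unfold Ap
  rw [abs_mul, abs_inv, Nat.abs_cast, inv_mul_le_iff₀ (by exact_mod_cast hT), mul_one]
  calc |∑ t, fpos q (s t)| ≤ ∑ t, |fpos q (s t)| := Finset.abs_sum_le_sum_abs _ _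
    _ ≤ ∑ _t : Fin T, (1:ℝ) := Finset.sum_le_sum fun t _ => abs_fpos_le (hs t)
    _ = T := by simp

lemma hq_le_four [IsProbabilityMeasure mu] (hG : ∀ᵐ x ∂mu, x ∈ Gset) (hT : 0 < T)
    {s : Fin T → ℝ × ℝ} (hs : ∀ t, s t ∈ Gset) (q : ℝ) :
    hq mu T q s ≤ 4 := by
  have h1 := abs_An_le hT hs q
  have h2 := abs_Ap_le hT hs q
  have h3 := abs_binNeg_le hG q
  have h4 := abs_binPos_le hG q
  unfold hq
  calc |An T q s - binNeg mu q| + |Ap T q s - binPos mu q|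
      ≤ (|An T q s| + |binNeg mu q|) + (|Ap T q s| + |binPos mu q|) :=
        add_le_add (abs_sub _ _) (abs_sub _ _)
    _ ≤ 4 := by linarith

/-- crude `s`-dependent bound, valid for every sample -/
lemma hq_le_M [IsProbabilityMeasure mu] (hG : ∀ᵐ x ∂mu, x ∈ Gset) (s : Fin T → ℝ × ℝ) (q : ℝ) :
    hq mu T q s ≤ 2 * ((T:ℝ)⁻¹ * ∑ t, |(s t).1 - (s t).2|) + 2 := by
  have hM : ∀ (f : ℝ × ℝ → ℝ), (∀ x, |f x| ≤ |x.1 - x.2|) →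
      |(T:ℝ)⁻¹ * ∑ t, f (s t)| ≤ (T:ℝ)⁻¹ * ∑ t, |(s t).1 - (s t).2| := by
    intro f hf
    rw [abs_mul, abs_inv, Nat.abs_cast]
    refine mul_le_mul_of_nonneg_left ?_ (by positivity)
    calc |∑ t, f (s t)| ≤ ∑ t, |f (s t)| := Finset.abs_sum_le_sum_abs _ _
      _ ≤ ∑ t, |(s t).1 - (s t).2| := Finset.sum_le_sum fun t _ => hf (s t)
  have h1 := hM (fneg q) (fun x => abs_fneg_le' x)
  have h2 := hM (fpos q) (fun x => abs_fpos_le' x)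
  have h3 := abs_binNeg_le hG q
  have h4 := abs_binPos_le hG q
  unfold hq An Ap
  calc |(T:ℝ)⁻¹ * ∑ t, fneg q (s t) - binNeg mu q| + |(T:ℝ)⁻¹ * ∑ t, fpos q (s t) - binPos mu q|
      ≤ (|(T:ℝ)⁻¹ * ∑ t, fneg q (s t)| + |binNeg mu q|)
        + (|(T:ℝ)⁻¹ * ∑ t, fpos q (s t)| + |binPos mu q|) :=
        add_le_add (abs_sub _ _) (abs_sub _ _)
    _ ≤ 2 * ((T:ℝ)⁻¹ * ∑ t, |(s t).1 - (s t).2|) + 2 := by linarith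

lemma mgf_hq [IsProbabilityMeasure mu] (hG : ∀ᵐ x ∂mu, x ∈ Gset) (hT : 0 < T)
    (q : ℝ) {l : ℝ} (hl : 0 ≤ l) :
    ∫ s : Fin T → ℝ × ℝ, Real.exp (l * hq mu T q s) ∂(Measure.pi fun _ => mu)
      ≤ 2 * Real.exp (8 * l^2 / T) := by
  have := mgf_two (mu := mu) (measurable_fneg q) (ae_fneg_le hG q)
    (measurable_fpos q) (ae_fpos_le hG q) hT hl
  simpa only [hq, An, Ap, binNeg_eq, binPos_eq] using this

lemma integrable_exp_hq [IsProbabilityMeasure mu] (hG : ∀ᵐ x ∂mu, x ∈ Gset) (hT : 0 < T)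
    (q : ℝ) {l : ℝ} (hl : 0 ≤ l) :
    Integrable (fun s : Fin T → ℝ × ℝ => Real.exp (l * hq mu T q s))
      (Measure.pi fun _ => mu) := by
  have := integrable_exp_two (mu := mu) (measurable_fneg q) (ae_fneg_le hG q)
    (measurable_fpos q) (ae_fpos_le hG q) hT hl
  simpa only [hq, An, Ap, binNeg_eq, binPos_eq] using this

/-- The `q`-averaged exponential moment functional. -/
def Yf (mu : Measure (ℝ × ℝ)) (T : ℕ) (l : ℝ) (s : Fin T → ℝ × ℝ) : ℝ :=
  ∫ q, Real.exp (l * hq mu T q s) ∂muq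

lemma exp_pair_integrable [IsProbabilityMeasure mu] (hG : ∀ᵐ x ∂mu, x ∈ Gset) (hT : 0 < T)
    {l : ℝ} (hl : 0 ≤ l) :
    Integrable (fun p : ℝ × (Fin T → ℝ × ℝ) => Real.exp (l * hq mu T p.1 p.2))
      (muq.prod (Measure.pi fun _ => mu)) := by
  have hmeas : Measurable fun p : ℝ × (Fin T → ℝ × ℝ) => Real.exp (l * hq mu T p.1 p.2) :=
    Real.measurable_exp.comp ((measurable_hq_pair mu T).const_mul l)
  have hnull : (Measure.pi fun _ : Fin T => mu) {s | ¬ ∀ t, s t ∈ Gset} = 0 := by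
    simpa [ae_iff] using ae_all_coords (T := T) hG
  have haep : ∀ᵐ p : ℝ × (Fin T → ℝ × ℝ) ∂(muq.prod (Measure.pi fun _ => mu)),
      ∀ t, p.2 t ∈ Gset := by
    rw [ae_iff]
    refine measure_mono_null (t := Set.univ ×ˢ {s : Fin T → ℝ × ℝ | ¬ ∀ t, s t ∈ Gset})
      (fun p hp => ?_) ?_
    · exact Set.mem_prod.mpr ⟨Set.mem_univ p.1, hp⟩
    · rw [Measure.prod_prod, hnull, mul_zero]
  refine integrable_of_ae_bound hmeas.aestronglyMeasurable (c := Real.exp (l * 4)) ?_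
  filter_upwards [haep] with p hp
  rw [abs_of_pos (Real.exp_pos _), Real.exp_le_exp]
  exact mul_le_mul_of_nonneg_left (hq_le_four hG hT hp p.1) hl

lemma integrable_Yf [IsProbabilityMeasure mu] (hG : ∀ᵐ x ∂mu, x ∈ Gset) (hT : 0 < T)
    {l : ℝ} (hl : 0 ≤ l) :
    Integrable (Yf mu T l) (Measure.pi fun _ => mu) :=
  (exp_pair_integrable hG hT hl).integral_prod_right

lemma integral_Yf_le [IsProbabilityMeasure mu] (hG : ∀ᵐ x ∂mu, x ∈ Gset) (hT : 0 < T)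
    {l : ℝ} (hl : 0 ≤ l) :
    ∫ s, Yf mu T l s ∂(Measure.pi fun _ => mu) ≤ 2 * Real.exp (8 * l^2 / T) := by
  have hint := exp_pair_integrable hG hT hl
  have hswap := integral_integral_swap (f := fun q (s : Fin T → ℝ × ℝ) =>
    Real.exp (l * hq mu T q s)) (μ := muq) (ν := Measure.pi fun _ => mu) hint
  calc ∫ s, Yf mu T l s ∂(Measure.pi fun _ => mu)
      = ∫ q, ∫ s, Real.exp (l * hq mu T q s) ∂(Measure.pi fun _ => mu) ∂muq := hswap.symm
    _ ≤ ∫ _q, 2 * Real.exp (8 * l^2 / T) ∂muq := by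
        refine integral_mono hint.integral_prod_left (integrable_const _) fun q => ?_
        exact mgf_hq hG hT q hl
    _ = 2 * Real.exp (8 * l^2 / T) := by simp

lemma integrable_hq_q [IsProbabilityMeasure mu] (hG : ∀ᵐ x ∂mu, x ∈ Gset)
    (s : Fin T → ℝ × ℝ) :
    Integrable (fun q => hq mu T q s) muq := by
  refine integrable_of_ae_bound ?_ (c := 2 * ((T:ℝ)⁻¹ * ∑ t, |(s t).1 - (s t).2|) + 2) ?_
  · exact ((measurable_hq_pair mu T).comp (measurable_id.prodMk measurable_const)
      ).aestronglyMeasurable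
  · filter_upwards with q
    rw [abs_of_nonneg (hq_nonneg mu T q s)]
    exact hq_le_M hG s q

lemma jensen_exp [IsProbabilityMeasure mu] (hG : ∀ᵐ x ∂mu, x ∈ Gset)
    (s : Fin T → ℝ × ℝ) {l : ℝ} (hl : 0 ≤ l) :
    Real.exp (l * Dd mu T s) ≤ Yf mu T l s := by
  have hint : Integrable (fun q => l * hq mu T q s) muq :=
    (integrable_hq_q hG s).const_mul l
  have hint2 : Integrable (fun q => Real.exp (l * hq mu T q s)) muq := by
    refine integrable_of_ae_bound ?_
      (c := Real.exp (l * (2 * ((T:ℝ)⁻¹ * ∑ t, |(s t).1 - (s t).2|) + 2))) ?_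
    · exact (Real.measurable_exp.comp (((measurable_hq_pair mu T).comp
        (measurable_id.prodMk measurable_const)).const_mul l)).aestronglyMeasurable
    · filter_upwards with q
      rw [abs_of_pos (Real.exp_pos _), Real.exp_le_exp]
      exact mul_le_mul_of_nonneg_left (hq_le_M hG s q) hl
  have hjen := convexOn_exp.map_integral_le (μ := muq) (f := fun q => l * hq mu T q s)
    continuous_exp.continuousOn isClosed_univ
    (Filter.Eventually.of_forall fun q => Set.mem_univ _) hint hint2
  have : ∫ q, l * hq mu T q s ∂muq = l * Dd mu T s := by
    rw [integral_const_mul]; rfl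
  rw [this] at hjen
  exact hjen

lemma chernoff [IsProbabilityMeasure mu] (hG : ∀ᵐ x ∂mu, x ∈ Gset) (hT : 0 < T)
    {l a : ℝ} (hl : 0 ≤ l) :
    (Measure.pi fun _ : Fin T => mu) {s | a ≤ Dd mu T s}
      ≤ ENNReal.ofReal (2 * Real.exp (8 * l^2 / T) * Real.exp (-(l * a))) := by
  set μT := Measure.pi fun _ : Fin T => mu
  have hsub : {s | a ≤ Dd mu T s} ⊆ {s | Real.exp (l * a) ≤ Yf mu T l s} := by
    intro s hs
    calc Real.exp (l * a) ≤ Real.exp (l * Dd mu T s) :=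
        Real.exp_le_exp.mpr (mul_le_mul_of_nonneg_left hs hl)
      _ ≤ Yf mu T l s := jensen_exp hG s hl
  have hYpos : 0 ≤ᵐ[μT] Yf mu T l :=
    Filter.Eventually.of_forall fun s => integral_nonneg fun q => (Real.exp_pos _).le
  have hmark := mul_meas_ge_le_integral_of_nonneg hYpos (integrable_Yf hG hT hl)
    (Real.exp (l * a))
  have h2 : (μT {s | Real.exp (l * a) ≤ Yf mu T l s}).toReal
      ≤ 2 * Real.exp (8 * l^2 / T) * Real.exp (-(l * a)) := by
    have hepos : (0:ℝ) < Real.exp (l * a) := Real.exp_pos _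
    rw [Real.exp_neg]
    rw [mul_comm (2 * Real.exp (8 * l^2 / T)) _, ← inv_mul_le_iff₀ (by positivity), inv_inv]
    exact hmark.trans (integral_Yf_le hG hT hl)
  calc μT {s | a ≤ Dd mu T s} ≤ μT {s | Real.exp (l * a) ≤ Yf mu T l s} := measure_mono hsub
    _ = ENNReal.ofReal ((μT {s | Real.exp (l * a) ≤ Yf mu T l s}).toReal) :=
        (ENNReal.ofReal_toReal (measure_ne_top _ _)).symm
    _ ≤ ENNReal.ofReal (2 * Real.exp (8 * l^2 / T) * Real.exp (-(l * a))) :=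
        ENNReal.ofReal_le_ofReal h2

lemma abs_pair_le {a b a' b' : ℝ} :
    |(|a| + |b|) - (|a'| + |b'|)| ≤ |a - a'| + |b - b'| := by
  have h1 : (|a| + |b|) - (|a'| + |b'|) = (|a| - |a'|) + (|b| - |b'|) := by ring
  rw [h1]
  calc |(|a| - |a'|) + (|b| - |b'|)| ≤ |(|a| - |a'|)| + |(|b| - |b'|)| := abs_add_le _ _
    _ ≤ |a - a'| + |b - b'| :=
        add_le_add (abs_abs_sub_abs_le_abs_sub a a') (abs_abs_sub_abs_le_abs_sub b b')

lemma abs_sq_pair_le {a b a' b' : ℝ} (ha : |a| ≤ 1) (hb : |b| ≤ 1) (ha' : |a'| ≤ 1)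
    (hb' : |b'| ≤ 1) :
    |(a^2 + b^2) - (a'^2 + b'^2)| ≤ 2 * (|a - a'| + |b - b'|) := by
  have h1 : (a^2 + b^2) - (a'^2 + b'^2) = (a - a') * (a + a') + (b - b') * (b + b') := by ring
  rw [h1]
  calc |(a - a') * (a + a') + (b - b') * (b + b')|
      ≤ |(a - a') * (a + a')| + |(b - b') * (b + b')| := abs_add_le _ _
    _ = |a - a'| * |a + a'| + |b - b'| * |b + b'| := by rw [abs_mul, abs_mul]
    _ ≤ |a - a'| * 2 + |b - b'| * 2 := by
        refine add_le_add ?_ ?_ <;>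
          refine mul_le_mul_of_nonneg_left ?_ (abs_nonneg _)
        · exact (abs_add_le _ _).trans (by linarith)
        · exact (abs_add_le _ _).trans (by linarith)
    _ = 2 * (|a - a'| + |b - b'|) := by ring

lemma measurable_An_q (T : ℕ) (s : Fin T → ℝ × ℝ) : Measurable fun q => An T q s :=
  (measurable_An_pair T).comp (measurable_id.prodMk measurable_const)
lemma measurable_Ap_q (T : ℕ) (s : Fin T → ℝ × ℝ) : Measurable fun q => Ap T q s :=
  (measurable_Ap_pair T).comp (measurable_id.prodMk measurable_const)

lemma deterministic [IsProbabilityMeasure mu] (hG : ∀ᵐ x ∂mu, x ∈ Gset) (hT : 0 < T)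
    {s : Fin T → ℝ × ℝ} (hs : ∀ t, s t ∈ Gset) :
    |l1ATB (empMeasure s) - l1ATB mu| ≤ Dd mu T s ∧
      |ATB (empMeasure s) - ATB mu| ≤ 2 * Dd mu T s := by
  have e1 : l1ATB (empMeasure s) = ∫ q, (|An T q s| + |Ap T q s|) ∂muq := by
    rw [l1ATB, intervalIntegral.integral_of_le zero_le_one]
    simp_rw [binNeg_emp, binPos_emp]
    rfl
  have e2 : l1ATB mu = ∫ q, (|binNeg mu q| + |binPos mu q|) ∂muq := by
    rw [l1ATB, intervalIntegral.integral_of_le zero_le_one]; rfl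
  have e3 : ATB (empMeasure s) = ∫ q, ((An T q s)^2 + (Ap T q s)^2) ∂muq := by
    rw [ATB, intervalIntegral.integral_of_le zero_le_one]
    simp_rw [binNeg_emp, binPos_emp]
    rfl
  have e4 : ATB mu = ∫ q, ((binNeg mu q)^2 + (binPos mu q)^2) ∂muq := by
    rw [ATB, intervalIntegral.integral_of_le zero_le_one]; rfl
  have i1 : Integrable (fun q => |An T q s| + |Ap T q s|) muq := by
    refine integrable_of_ae_bound ((measurable_An_q T s).abs.add
      (measurable_Ap_q T s).abs).aestronglyMeasurable (c := 2) ?_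
    filter_upwards with q
    have := abs_An_le hT hs q; have := abs_Ap_le hT hs q
    rw [abs_of_nonneg (by positivity)]; linarith
  have i2 : Integrable (fun q => |binNeg mu q| + |binPos mu q|) muq := by
    refine integrable_of_ae_bound ((measurable_binNeg mu).abs.add
      (measurable_binPos mu).abs).aestronglyMeasurable (c := 2) ?_
    filter_upwards with q
    have := abs_binNeg_le hG q; have := abs_binPos_le hG q
    rw [abs_of_nonneg (by positivity)]; linarith
  have i3 : Integrable (fun q => (An T q s)^2 + (Ap T q s)^2) muq := by
    refine integrable_of_ae_bound (((measurable_An_q T s).pow_const 2).add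
      ((measurable_Ap_q T s).pow_const 2)).aestronglyMeasurable (c := 2) ?_
    filter_upwards with q
    have h1 := abs_An_le hT hs q; have h2 := abs_Ap_le hT hs q
    rw [abs_of_nonneg (by positivity)]
    nlinarith [abs_nonneg (An T q s), abs_nonneg (Ap T q s), sq_abs (An T q s), sq_abs (Ap T q s)]
  have i4 : Integrable (fun q => (binNeg mu q)^2 + (binPos mu q)^2) muq := by
    refine integrable_of_ae_bound (((measurable_binNeg mu).pow_const 2).add
      ((measurable_binPos mu).pow_const 2)).aestronglyMeasurable (c := 2) ?_
    filter_upwards with q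
    have h1 := abs_binNeg_le hG q; have h2 := abs_binPos_le hG q
    rw [abs_of_nonneg (by positivity)]
    nlinarith [abs_nonneg (binNeg mu q), abs_nonneg (binPos mu q), sq_abs (binNeg mu q),
      sq_abs (binPos mu q)]
  have ihq : Integrable (fun q => hq mu T q s) muq := integrable_hq_q hG s
  constructor
  · rw [e1, e2, ← integral_sub i1 i2]
    calc |∫ q, ((|An T q s| + |Ap T q s|) - (|binNeg mu q| + |binPos mu q|)) ∂muq|
        ≤ ∫ q, |(|An T q s| + |Ap T q s|) - (|binNeg mu q| + |binPos mu q|)| ∂muq := by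
          simpa [Real.norm_eq_abs] using norm_integral_le_integral_norm
            (μ := muq) fun q => (|An T q s| + |Ap T q s|) - (|binNeg mu q| + |binPos mu q|)
      _ ≤ ∫ q, hq mu T q s ∂muq := by
          refine integral_mono (i1.sub i2).abs ihq fun q => ?_
          exact abs_pair_le
      _ = Dd mu T s := rfl
  · rw [e3, e4, ← integral_sub i3 i4]
    calc |∫ q, (((An T q s)^2 + (Ap T q s)^2) - ((binNeg mu q)^2 + (binPos mu q)^2)) ∂muq|
        ≤ ∫ q, |((An T q s)^2 + (Ap T q s)^2) - ((binNeg mu q)^2 + (binPos mu q)^2)| ∂muq := by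
          simpa [Real.norm_eq_abs] using norm_integral_le_integral_norm
            (μ := muq) fun q => ((An T q s)^2 + (Ap T q s)^2)
              - ((binNeg mu q)^2 + (binPos mu q)^2)
      _ ≤ ∫ q, 2 * hq mu T q s ∂muq := by
          refine integral_mono (i3.sub i4).abs (ihq.const_mul 2) fun q => ?_
          exact abs_sq_pair_le (abs_An_le hT hs q) (abs_Ap_le hT hs q)
            (abs_binNeg_le hG q) (abs_binPos_le hG q)
      _ = 2 * Dd mu T s := by rw [integral_const_mul]; rfl

end ATBwork

/-- Sample complexity of estimating ATB and ℓ1-ATB: `T = O(ε⁻² log (1/δ))` i.i.d. samples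
suffice to estimate both within `ε`, with probability at least `1 - δ`. -/
theorem atb_sample_complexity :
    ∃ C : ℝ, 0 < C ∧
      ∀ (mu : Measure (ℝ × ℝ)), IsProbabilityMeasure mu →
        (∀ᵐ x ∂mu, x.1 ∈ Set.Icc (0:ℝ) 1 ∧ (x.2 = 0 ∨ x.2 = 1)) →
        ∀ ε δ : ℝ, ε ∈ Set.Ioo (0:ℝ) (1/3) → δ ∈ Set.Ioo (0:ℝ) (1/3) →
        ∀ T : ℕ, (T : ℝ) > C * ε⁻¹ ^ 2 * Real.log (1 / δ) →
        Measure.pi (fun _ : Fin T => mu)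
            {s | |l1ATB (empMeasure s) - l1ATB mu| ≤ ε ∧ |ATB (empMeasure s) - ATB mu| ≤ ε}
          ≥ ENNReal.ofReal (1 - δ) := by
  refine ⟨1000, by norm_num, ?_⟩
  intro mu hprob hsupp ε δ hε hδ T hTbig
  haveI := hprob
  obtain ⟨hε0, hε3⟩ := hε
  obtain ⟨hδ0, hδ3⟩ := hδ
  have hG : ∀ᵐ x ∂mu, x ∈ ATBwork.Gset := hsupp
  have hL : 0 < Real.log (1/δ) := Real.log_pos (by rw [lt_div_iff₀ hδ0]; linarith)
  have hT0 : 0 < T := by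
    rcases Nat.eq_zero_or_pos T with h | h
    · exfalso
      rw [h] at hTbig
      have : (0:ℝ) < 1000 * ε⁻¹ ^ 2 * Real.log (1/δ) := by positivity
      simp only [Nat.cast_zero] at hTbig
      linarith
    · exact h
  set μT := Measure.pi fun _ : Fin T => mu with hμT
  set l : ℝ := ε * T / 32 with hldef
  have hl0 : 0 ≤ l := by positivity
  have hcher := ATBwork.chernoff hG hT0 (l := l) (a := ε/2) hl0
  have hTpos : (0:ℝ) < T := by exact_mod_cast hT0
  have hnum : 2 * Real.exp (8 * l^2 / T) * Real.exp (-(l * (ε/2))) ≤ δ := by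
    have hcomb : 2 * Real.exp (8 * l^2 / T) * Real.exp (-(l * (ε/2)))
        = 2 * Real.exp (8 * l^2 / T - l * (ε/2)) := by
      rw [mul_assoc, ← Real.exp_add]; ring_nf
    rw [hcomb]
    have harg : 8 * l^2 / T - l * (ε/2) = -(ε^2 * T / 128) := by
      rw [hldef]; field_simp; ring
    rw [harg]
    have hTe : ε^2 * T > 1000 * Real.log (1/δ) := by
      have h1 : ε^2 * (1000 * ε⁻¹ ^ 2 * Real.log (1/δ)) = 1000 * Real.log (1/δ) := by
        field_simp
      nlinarith [mul_lt_mul_of_pos_left hTbig (by positivity : (0:ℝ) < ε^2)]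
    have h2 : Real.exp (-(ε^2 * T / 128)) ≤ Real.exp (-(2 * Real.log (1/δ))) := by
      rw [Real.exp_le_exp]
      nlinarith
    have hexp : Real.exp (-Real.log (1/δ)) = δ := by
      rw [one_div, Real.log_inv, neg_neg, Real.exp_log hδ0]
    have h3 : Real.exp (-(2 * Real.log (1/δ))) = δ^2 := by
      rw [show -(2 * Real.log (1/δ)) = -Real.log (1/δ) + -Real.log (1/δ) by ring,
        Real.exp_add, hexp]
      ring
    have h4 : 2 * δ^2 ≤ δ := by nlinarith
    calc 2 * Real.exp (-(ε^2 * T / 128)) ≤ 2 * Real.exp (-(2 * Real.log (1/δ))) := by linarith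
      _ = 2 * δ^2 := by rw [h3]
      _ ≤ δ := h4
  have hmeasδ : μT {s | ε/2 ≤ ATBwork.Dd mu T s} ≤ ENNReal.ofReal δ :=
    hcher.trans (ENNReal.ofReal_le_ofReal hnum)
  have hnullG : μT {s : Fin T → ℝ × ℝ | ¬ ∀ t, s t ∈ ATBwork.Gset} = 0 := by
    simpa [ae_iff] using ATBwork.ae_all_coords (T := T) hG
  set A := {s : Fin T → ℝ × ℝ |
    |l1ATB (empMeasure s) - l1ATB mu| ≤ ε ∧ |ATB (empMeasure s) - ATB mu| ≤ ε} with hA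
  have hsub : Aᶜ ⊆ {s | ε/2 ≤ ATBwork.Dd mu T s}
      ∪ {s : Fin T → ℝ × ℝ | ¬ ∀ t, s t ∈ ATBwork.Gset} := by
    intro s hsmem
    by_contra hns
    rw [Set.mem_union] at hns
    push_neg at hns
    obtain ⟨h1, h2⟩ := hns
    simp only [Set.mem_setOf_eq, not_le] at h1
    simp only [Set.mem_setOf_eq, not_not, not_exists] at h2

    obtain ⟨d1, d2⟩ := ATBwork.deterministic hG hT0 h2
    exact hsmem ⟨d1.trans (by linarith), d2.trans (by linarith)⟩
  have hcompl : μT Aᶜ ≤ ENNReal.ofReal δ := by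
    refine (measure_mono hsub).trans ?_
    refine (measure_union_le _ _).trans ?_
    rw [hnullG, add_zero]
    exact hmeasδ
  have hone : (1:ℝ≥0∞) ≤ μT A + μT Aᶜ := by
    have := measure_union_le (μ := μT) A Aᶜ
    rwa [Set.union_compl_self, measure_univ] at this
  calc μT A ≥ 1 - ENNReal.ofReal δ := by
        rw [ge_iff_le, tsub_le_iff_right]
        exact hone.trans (add_le_add le_rfl hcompl)
    _ = ENNReal.ofReal (1 - δ) := by
        rw [ENNReal.ofReal_sub _ hδ0.le, ENNReal.ofReal_one]

end
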